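/- Let X and Y be independent real random variables with Y symmetric (Y has the same distribution as -Y). Then for all u > 0, P(X + |Y| > u) = 2·P(X + Y > u) − P(X > u + |Y|). -/

import Mathlib

open MeasureTheory ProbabilityTheory

theorem sym_identity
    {Ω : Type*} [MeasurableSpace Ω] (μ : Measure Ω) [IsProbabilityMeasure μ]
    (X Y : Ω → ℝ) (hX : Measurable X) (hY : Measurable Y)
    (hindep : IndepFun X Y μ)
    (hsym : Measure.map Y μ = Measure.map (fun ω => -Y ω) μ) :
    ∀ u : ℝ, 0 < u →
      (μ {ω | X ω + |Y ω| > u}).toReal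
        = 2 * (μ {ω | X ω + Y ω > u}).toReal - (μ {ω | X ω > u + |Y ω|}).toReal := by
  intro u _
  set A : Set Ω := {ω | X ω + Y ω > u} with hA
  set B : Set Ω := {ω | X ω - Y ω > u} with hB
  have hmA : MeasurableSet A := measurableSet_lt measurable_const (hX.add hY)
  have hmB : MeasurableSet B := measurableSet_lt measurable_const (hX.sub hY)
  -- set identities
  have hcup : {ω | X ω + |Y ω| > u} = A ∪ B := by
    ext ω
    simp only [Set.mem_setOf_eq, Set.mem_union, hA, hB, gt_iff_lt, abs_eq_max_neg]
    rw [← max_add_add_left, lt_max_iff]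
    constructor <;> rintro (h | h)
    · exact Or.inl h
    · right; linarith
    · exact Or.inl h
    · right; linarith
  have hcap : {ω | X ω > u + |Y ω|} = A ∩ B := by
    ext ω
    simp only [Set.mem_setOf_eq, Set.mem_inter_iff, hA, hB, gt_iff_lt]
    rcases abs_cases (Y ω) with ⟨h1, h2⟩ | ⟨h1, h2⟩ <;> constructor <;>
      intro h <;> first | (constructor <;> linarith) | (obtain ⟨ha, hb⟩ := h; linarith)
  -- P(B) = P(A) via independence + symmetry
  have hindep' : IndepFun X (fun ω => -Y ω) μ :=
    hindep.comp measurable_id measurable_neg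
  have e1 : Measure.map (fun ω => (X ω, Y ω)) μ
      = (Measure.map X μ).prod (Measure.map Y μ) :=
    (indepFun_iff_map_prod_eq_prod_map_map hX.aemeasurable hY.aemeasurable).mp hindep
  have e2 : Measure.map (fun ω => (X ω, -Y ω)) μ
      = (Measure.map X μ).prod (Measure.map (fun ω => -Y ω) μ) :=
    (indepFun_iff_map_prod_eq_prod_map_map hX.aemeasurable hY.neg.aemeasurable).mp hindep'
  have hs : MeasurableSet {p : ℝ × ℝ | u < p.1 + p.2} :=
    measurableSet_lt measurable_const (measurable_fst.add measurable_snd)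
  have hBA : μ B = μ A := by
    have hmap1 : μ A = Measure.map (fun ω => (X ω, Y ω)) μ {p : ℝ × ℝ | u < p.1 + p.2} := by
      rw [Measure.map_apply (hX.prodMk hY) hs]
      rfl
    have hmap2 : μ B = Measure.map (fun ω => (X ω, -Y ω)) μ {p : ℝ × ℝ | u < p.1 + p.2} := by
      rw [Measure.map_apply (f := fun ω => (X ω, -Y ω)) (hX.prodMk hY.neg) hs]
      congr 1

    rw [hmap1, hmap2, e1, e2, hsym]
  have key : μ (A ∪ B) + μ (A ∩ B) = μ A + μ B := measure_union_add_inter A hmB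
  rw [hcup, hcap]
  have f1 : μ (A ∪ B) ≠ ⊤ := measure_ne_top μ _
  have f2 : μ (A ∩ B) ≠ ⊤ := measure_ne_top μ _
  have f3 : μ A ≠ ⊤ := measure_ne_top μ _
  have f4 : μ B ≠ ⊤ := measure_ne_top μ _
  have key' : (μ (A ∪ B)).toReal + (μ (A ∩ B)).toReal = (μ A).toReal + (μ B).toReal := by
    rw [← ENNReal.toReal_add f1 f2, ← ENNReal.toReal_add f3 f4, key]
  rw [hBA] at key'
  linarith
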